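/- Let m,n ≥ 2, and consider the metric graph K_{m,n} with unit edge lengths, vertices v₁,…,v_m,w₁,…,w_n. Let D be a v_m-reduced divisor on K_{m,n} equipped with an order v_m ≺ v₁ ≺ … ≺ v_{m-1}, v_m ≺ w₁ ≺ … ≺ w_n as in the reducedness characterization, where D̃(u) denotes D(u) plus the interior edge contributions from edges to earlier vertices, and d̃(u) denotes the number of edges to earlier vertices. Then for each i ∈ {1,…,n}: D̃(wᵢ) + 1 - #{j ∈ {1,…,m-1} : D̃(vⱼ) ≤ i - 2} ≤ 1. -/

import Mathlib

attribute [local instance] Classical.propDecidable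

/-- A combinatorial model of a compact metric graph: a finite multigraph with
positive edge lengths. -/
structure MGraph where
  V : Type
  E : Type
  [instV : Fintype V]
  [instE : Fintype E]
  [instDV : DecidableEq V]
  [instDE : DecidableEq E]
  src : E → V
  tgt : E → V
  len : E → ℝ
  len_pos : ∀ e, 0 < len e

attribute [instance] MGraph.instV MGraph.instE MGraph.instDV MGraph.instDE

/-- The points of the metric graph: vertices and interior points of edges
(an interior point of the edge `e` is a parameter `t` with `0 < t < len e`). -/
inductive MPoint (G : MGraph) where
  | vert : G.V → MPoint G
  | inner : (e : G.E) → Set.Ioo (0 : ℝ) (G.len e) → MPoint G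

/-- A divisor on a metric graph: a finitely supported `ℤ`-valued function on points. -/
abbrev MDiv (G : MGraph) := MPoint G →₀ ℤ

/-- The degree of a divisor. -/
def MDiv.deg {G : MGraph} (D : MDiv G) : ℤ := D.sum fun _ c => c

/-- A divisor is effective if all its coefficients are nonnegative. -/
def MDiv.Effective {G : MGraph} (D : MDiv G) : Prop := ∀ p, 0 ≤ D p

/-- The function induced on the parametrizing interval `[0, len e]` of an edge by a
function on the points of the graph. -/
noncomputable def edgeFun {G : MGraph} (f : MPoint G → ℝ) (e : G.E) (t : ℝ) : ℝ :=
  if h : 0 < t ∧ t < G.len e then f (MPoint.inner e ⟨t, h⟩)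
  else if t ≤ 0 then f (MPoint.vert (G.src e)) else f (MPoint.vert (G.tgt e))

/-- `g` is piecewise linear with integer slopes on `[0, L]`. -/
def IsPLInt (g : ℝ → ℝ) (L : ℝ) : Prop :=
  ∃ (k : ℕ) (t : Fin (k + 1) → ℝ), StrictMono t ∧ t 0 = 0 ∧ t (Fin.last k) = L ∧
    ∀ i : Fin k, ∃ s : ℤ, ∀ x ∈ Set.Icc (t i.castSucc) (t i.succ),
      g x = g (t i.castSucc) + s * (x - t i.castSucc)

/-- A rational function on the metric graph: piecewise linear with integer slopes on
every edge. -/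
def IsRational {G : MGraph} (f : MPoint G → ℝ) : Prop :=
  ∀ e : G.E, IsPLInt (edgeFun f e) (G.len e)

/-- The outgoing slope of `g` at `t` in the increasing direction. -/
noncomputable def slopeR (g : ℝ → ℝ) (t : ℝ) : ℤ :=
  if h : ∃ s : ℤ, ∃ ε : ℝ, 0 < ε ∧ ∀ x ∈ Set.Ioo t (t + ε), g x = g t + s * (x - t)
  then h.choose else 0

/-- The outgoing slope of `g` at `t` in the decreasing direction. -/
noncomputable def slopeL (g : ℝ → ℝ) (t : ℝ) : ℤ :=
  if h : ∃ s : ℤ, ∃ ε : ℝ, 0 < ε ∧ ∀ x ∈ Set.Ioo (t - ε) t, g x = g t + s * (t - x)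
  then h.choose else 0

/-- The order of a rational function at a point: the sum of its outgoing slopes. -/
noncomputable def ordAt {G : MGraph} (f : MPoint G → ℝ) : MPoint G → ℤ
  | .vert v => ∑ e : G.E,
      ((if G.src e = v then slopeR (edgeFun f e) 0 else 0) +
       (if G.tgt e = v then slopeL (edgeFun f e) (G.len e) else 0))
  | .inner e t => slopeR (edgeFun f e) t.1 + slopeL (edgeFun f e) t.1

/-- Linear equivalence of divisors: the difference is the divisor of a rational function. -/
def LinEquiv {G : MGraph} (D D' : MDiv G) : Prop :=
  ∃ f : MPoint G → ℝ, IsRational f ∧ ∀ p, D p - D' p = ordAt f p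

/-- `rankGe D r`: for every effective divisor `E` of degree `r` there is an effective
divisor linearly equivalent to `D - E`. -/
def rankGe {G : MGraph} (D : MDiv G) (r : ℤ) : Prop :=
  ∀ E : MDiv G, E.Effective → E.deg = r → ∃ D' : MDiv G, D'.Effective ∧ LinEquiv (D - E) D'

/-- The (Baker–Norine) rank of a divisor on a metric graph. -/
noncomputable def divRank {G : MGraph} (D : MDiv G) : ℤ := sSup {r : ℤ | rankGe D r}

/-- The complete bipartite metric graph `K_{m,n}` with all edge lengths `1`. -/
def Kgraph (m n : ℕ) : MGraph where
  V := Fin m ⊕ Fin n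
  E := Fin m × Fin n
  instV := inferInstance
  instE := inferInstance
  instDV := inferInstance
  instDE := inferInstance
  src e := Sum.inl e.1
  tgt e := Sum.inr e.2
  len _ := 1
  len_pos _ := one_pos

/-- The total coefficient of a divisor on the open interior of an edge. -/
noncomputable def edgeSum {G : MGraph} (D : MDiv G) (e : G.E) : ℤ :=
  ∑ p ∈ D.support, if ∃ t, p = MPoint.inner e t then D p else 0

/-- The edges joining `u` to a vertex which is earlier in the order given by `ord`. -/
noncomputable def earlierEdges {G : MGraph} (ord : G.V → ℕ) (u : G.V) : Finset G.E :=
  Finset.univ.filter fun e =>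
    (G.src e = u ∧ ord (G.tgt e) < ord u) ∨ (G.tgt e = u ∧ ord (G.src e) < ord u)

/-- `D̃(u)`: the coefficient of `D` at `u` plus the interior coefficients of `D` on the
edges joining `u` to earlier vertices. -/
noncomputable def Dtilde {G : MGraph} (D : MDiv G) (ord : G.V → ℕ) (u : G.V) : ℤ :=
  D (MPoint.vert u) + ∑ e ∈ earlierEdges ord u, edgeSum D e

/-- `d̃(u)`: the number of edges joining `u` to earlier vertices. -/
noncomputable def dtilde {G : MGraph} (ord : G.V → ℕ) (u : G.V) : ℤ :=
  (earlierEdges (G := G) ord u).card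

theorem mem_earlierEdges {G : MGraph} (ord : G.V → ℕ) (u : G.V) (e : G.E) :
    e ∈ earlierEdges ord u ↔
      (G.src e = u ∧ ord (G.tgt e) < ord u) ∨ (G.tgt e = u ∧ ord (G.src e) < ord u) := by
  simp [earlierEdges]

/-- For a `v_m`-reduced divisor on the unit-length `K_{m,n}`, with an order
`v_m ≺ v₁ ≺ … ≺ v_{m-1}`, `v_m ≺ w₁ ≺ … ≺ w_n` as in the characterization of reduced
divisors (here `v_m = Sum.inl ⟨m-1⟩`, `v_j = Sum.inl ⟨j-1⟩`, `w_i = Sum.inr ⟨i-1⟩`),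
one has `D̃(wᵢ) + 1 - #{j : D̃(vⱼ) ≤ i-2} ≤ 1` for each `i`. -/
theorem r_vector_le_one (m n : ℕ) (hm : 2 ≤ m) (hn : 2 ≤ n)
    (D : MDiv (Kgraph m n)) (ord : Fin m ⊕ Fin n → ℕ)
    (vm : Fin m) (hvm : (vm : ℕ) = m - 1)
    (hinj : Function.Injective ord)
    (hfirst : ∀ u : Fin m ⊕ Fin n, u ≠ Sum.inl vm → ord (Sum.inl vm) < ord u)
    (hordv : ∀ i j : Fin m, (i : ℕ) < (j : ℕ) → (j : ℕ) < m - 1 →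
      ord (Sum.inl i) < ord (Sum.inl j))
    (hordw : ∀ i j : Fin n, (i : ℕ) < (j : ℕ) → ord (Sum.inr i) < ord (Sum.inr j))
    (heff : ∀ p : MPoint (Kgraph m n), p ≠ MPoint.vert (Sum.inl vm) → 0 ≤ D p)
    (hedge : ∀ e : (Kgraph m n).E, edgeSum D e ≤ 1)
    (hred : ∀ u : Fin m ⊕ Fin n, u ≠ Sum.inl vm →
      Dtilde D ord u < dtilde (G := Kgraph m n) ord u) :
    ∀ i : Fin n,
      Dtilde D ord (Sum.inr i) + 1 -
        ((Finset.univ.filter fun j : Fin m =>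
          (j : ℕ) < m - 1 ∧ Dtilde D ord (Sum.inl j) ≤ (i : ℤ) - 1).card : ℤ) ≤ 1 := by
  intro i
  set S : Finset (Fin m) :=
    Finset.univ.filter (fun a => ord (Sum.inl a) < ord (Sum.inr i)) with hS
  set T : Finset (Fin m) := Finset.univ.filter (fun j : Fin m =>
      (j : ℕ) < m - 1 ∧ Dtilde D ord (Sum.inl j) ≤ (i : ℤ) - 1) with hT
  -- d̃(w_i) = S.card
  have hdw : (earlierEdges (G := Kgraph m n) ord (Sum.inr i)).card = S.card := by
    apply Finset.card_nbij (fun e => e.1)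
    · intro e he
      replace he := (mem_earlierEdges _ _ _).mp (Finset.mem_coe.mp he)
      simp only [earlierEdges, Kgraph, Finset.mem_filter, Finset.mem_univ, true_and] at he
      simp only [hS, Finset.mem_filter, Finset.mem_univ, true_and]
      rcases he with ⟨h, _⟩ | ⟨_, h⟩
      · exact absurd h (by simp)
      · exact Finset.mem_coe.mpr (by simpa using h)
    · intro e1 h1 e2 h2 h
      replace h1 := (mem_earlierEdges _ _ _).mp (Finset.mem_coe.mp h1)
      replace h2 := (mem_earlierEdges _ _ _).mp (Finset.mem_coe.mp h2)
      simp only [earlierEdges, Kgraph, Finset.coe_filter, Set.mem_setOf_eq] at h1 h2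
      have he1 : e1.2 = i := by
        rcases h1 with ⟨h, _⟩ | ⟨h, _⟩
        · exact absurd h (by simp)
        · exact Sum.inr_injective h
      have he2 : e2.2 = i := by
        rcases h2 with ⟨h, _⟩ | ⟨h, _⟩
        · exact absurd h (by simp)
        · exact Sum.inr_injective h
      exact Prod.ext h (he1.trans he2.symm)
    · intro a ha
      simp only [hS, Finset.coe_filter, Set.mem_setOf_eq] at ha
      exact ⟨(a, i), by
        refine Finset.mem_coe.mpr ((mem_earlierEdges _ _ _).mpr ?_)
        simp only [earlierEdges, Kgraph, Finset.coe_filter, Set.mem_setOf_eq,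
          Finset.mem_univ, true_and]
        tauto, rfl⟩
  have h1 : Dtilde D ord (Sum.inr i) ≤ (S.card : ℤ) - 1 := by
    have h := hred (Sum.inr i) (by simp)
    unfold dtilde at h; rw [hdw] at h
    omega
  have hvmS : vm ∈ S := by
    simp only [hS, Finset.mem_filter, Finset.mem_univ, true_and]
    exact hfirst _ (by simp)
  -- key claim: S.erase vm ⊆ T
  have hsub : S.erase vm ⊆ T := by
    intro j hj
    rcases Finset.mem_erase.mp hj with ⟨hjne, hjS⟩
    simp only [hS, Finset.mem_filter, Finset.mem_univ, true_and] at hjS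
    have hjlt : (j : ℕ) < m - 1 := by
      have : (j : ℕ) ≠ m - 1 := fun h => hjne (Fin.ext (h.trans hvm.symm))
      have := j.isLt
      omega
    -- d̃(v_j) = card of earlier w's
    have hdv : (earlierEdges (G := Kgraph m n) ord (Sum.inl j)).card =
        (Finset.univ.filter fun k : Fin n => ord (Sum.inr k) < ord (Sum.inl j)).card := by
      apply Finset.card_nbij (fun e => e.2)
      · intro e he
        replace he := (mem_earlierEdges _ _ _).mp (Finset.mem_coe.mp he)
        simp only [earlierEdges, Kgraph, Finset.mem_filter, Finset.mem_univ, true_and] at he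
        simp only [Finset.mem_filter, Finset.mem_univ, true_and]
        rcases he with ⟨h, h'⟩ | ⟨h, _⟩
        · exact Finset.mem_coe.mpr (by simpa using h')
        · exact absurd h (by simp)
      · intro e1 h1 e2 h2 h
        replace h1 := (mem_earlierEdges _ _ _).mp (Finset.mem_coe.mp h1)
        replace h2 := (mem_earlierEdges _ _ _).mp (Finset.mem_coe.mp h2)
        simp only [earlierEdges, Kgraph, Finset.coe_filter, Set.mem_setOf_eq] at h1 h2
        have he1 : e1.1 = j := by
          rcases h1 with ⟨h, _⟩ | ⟨h, _⟩
          · exact Sum.inl_injective h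
          · exact absurd h (by simp)
        have he2 : e2.1 = j := by
          rcases h2 with ⟨h, _⟩ | ⟨h, _⟩
          · exact Sum.inl_injective h
          · exact absurd h (by simp)
        exact Prod.ext (he1.trans he2.symm) h
      · intro k hk
        simp only [Finset.coe_filter, Set.mem_setOf_eq] at hk
        exact ⟨(j, k), by
          refine Finset.mem_coe.mpr ((mem_earlierEdges _ _ _).mpr ?_)
          simp only [earlierEdges, Kgraph, Finset.coe_filter, Set.mem_setOf_eq,
            Finset.mem_univ, true_and]
          tauto, rfl⟩
    -- earlier w's of v_j all have index < i
    have hsub2 : (Finset.univ.filter fun k : Fin n => ord (Sum.inr k) < ord (Sum.inl j)) ⊆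
        Finset.Iio i := by
      intro k hk
      simp only [Finset.mem_filter, Finset.mem_univ, true_and] at hk
      have hki : ord (Sum.inr k) < ord (Sum.inr i) := hk.trans hjS
      rw [Finset.mem_Iio]
      by_contra hle
      push_neg at hle
      rcases lt_or_eq_of_le hle with h | h
      · have h' : (i : ℕ) < (k : ℕ) := h
        exact absurd (hordw i k h') (by omega)
      · rw [h] at hki
        omega
    have hcard2 : (Finset.univ.filter fun k : Fin n =>
        ord (Sum.inr k) < ord (Sum.inl j)).card ≤ (i : ℕ) := by
      have := Finset.card_le_card hsub2
      rwa [Fin.card_Iio] at this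
    have hD : Dtilde D ord (Sum.inl j) ≤ (i : ℤ) - 1 := by
      have h := hred (Sum.inl j) (fun h => hjne (Sum.inl_injective h))
      unfold dtilde at h; rw [hdv] at h
      have : ((Finset.univ.filter fun k : Fin n =>
          ord (Sum.inr k) < ord (Sum.inl j)).card : ℤ) ≤ (i : ℤ) := by exact_mod_cast hcard2
      omega
    simp only [hT, Finset.mem_filter, Finset.mem_univ, true_and]
    exact ⟨hjlt, hD⟩
  have h2 : S.card ≤ T.card + 1 := by
    have := Finset.card_le_card hsub
    have := Finset.card_erase_of_mem hvmS
    omega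
  have : (S.card : ℤ) ≤ (T.card : ℤ) + 1 := by exact_mod_cast h2
  omega
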